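/- Let q > 0, q ≠ 1, and R_q = 2/(1-q) if 0 < q < 1, R_q = 2q/(q-1) if q > 1. Then for every nonzero complex z such that |z| < R_q and |qz| < R_q, the Jackson q-derivative of 𝓔_q equals the average of 𝓔_q at z and qz: (𝓔_q(qz) − 𝓔_q(z))/((q−1)z) = (𝓔_q(z) + 𝓔_q(qz))/2, where 𝓔_q(z) = ∑_{n=0}^∞ z^n/{n}_q!. -/

import Mathlib

/-- The symbol `{n}_q = 2(1-q^n)/((1-q)(1+q^(n-1)))` (for `n ≥ 1`). -/
noncomputable def qBrace (q : ℝ) (n : ℕ) : ℝ :=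
  2 * (1 - q ^ n) / ((1 - q) * (1 + q ^ (n - 1)))

/-- The factorial `{n}_q! = {1}_q {2}_q ⋯ {n}_q`, with `{0}_q! = 1`. -/
noncomputable def qBraceFact (q : ℝ) (n : ℕ) : ℝ := ∏ k ∈ Finset.range n, qBrace q (k + 1)

/-- The radius `R_q = 2/(1-q)` for `0 < q < 1` and `R_q = 2q/(q-1)` for `q > 1`. -/
noncomputable def Rq (q : ℝ) : ℝ := if q < 1 then 2 / (1 - q) else 2 * q / (q - 1)

/-- The improved q-exponential function `𝓔_q(z) = ∑_{n=0}^∞ z^n/{n}_q!`. -/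
noncomputable def impExp (q : ℝ) (z : ℂ) : ℂ := ∑' n : ℕ, z ^ n / (qBraceFact q n : ℂ)

lemma qBrace_succ (q : ℝ) (n : ℕ) :
    qBrace q (n + 1) = 2 * (1 - q ^ (n + 1)) / ((1 - q) * (1 + q ^ n)) := by
  simp [qBrace]

lemma qBrace_succ_pos {q : ℝ} (hq : 0 < q) (hq1 : q ≠ 1) (n : ℕ) :
    0 < qBrace q (n + 1) := by
  rw [qBrace_succ]
  rcases lt_or_gt_of_ne hq1 with h | h
  · apply div_pos
    · have : q ^ (n + 1) < 1 := pow_lt_one₀ hq.le h (Nat.succ_ne_zero n)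
      linarith
    · have : 0 < q ^ n := pow_pos hq n
      nlinarith
  · apply div_pos_of_neg_of_neg
    · have : 1 < q ^ (n + 1) := one_lt_pow₀ h (Nat.succ_ne_zero n)
      linarith
    · have : 0 < q ^ n := pow_pos hq n
      nlinarith

lemma qBraceFact_pos {q : ℝ} (hq : 0 < q) (hq1 : q ≠ 1) (n : ℕ) :
    0 < qBraceFact q n :=
  Finset.prod_pos fun k _ => qBrace_succ_pos hq hq1 k

lemma Rq_pos {q : ℝ} (hq : 0 < q) (hq1 : q ≠ 1) : 0 < Rq q := by
  rw [Rq]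
  rcases lt_or_gt_of_ne hq1 with h | h
  · rw [if_pos h]; apply div_pos two_pos (by linarith)
  · rw [if_neg (not_lt.2 h.le)]
    apply div_pos (by linarith) (by linarith)

lemma tendsto_qBrace {q : ℝ} (hq : 0 < q) (hq1 : q ≠ 1) :
    Filter.Tendsto (fun n => qBrace q (n + 1)) Filter.atTop (nhds (Rq q)) := by
  rcases lt_or_gt_of_ne hq1 with h | h
  · have hpow : Filter.Tendsto (fun n : ℕ => q ^ n) Filter.atTop (nhds 0) :=
      tendsto_pow_atTop_nhds_zero_of_lt_one hq.le h
    have hpow1 : Filter.Tendsto (fun n : ℕ => q ^ (n + 1)) Filter.atTop (nhds 0) := by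
      exact hpow.comp (Filter.tendsto_add_atTop_nat 1)
    have : Filter.Tendsto (fun n : ℕ => 2 * (1 - q ^ (n + 1)) / ((1 - q) * (1 + q ^ n)))
        Filter.atTop (nhds (2 * (1 - 0) / ((1 - q) * (1 + 0)))) := by
      apply Filter.Tendsto.div
      · exact (tendsto_const_nhds.sub hpow1).const_mul 2
      · exact (tendsto_const_nhds.add hpow).const_mul (1 - q)
      · have : (0:ℝ) < (1 - q) * (1 + 0) := by nlinarith
        exact this.ne'
    have heq : (2 : ℝ) * (1 - 0) / ((1 - q) * (1 + 0)) = Rq q := by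
      rw [Rq, if_pos h]; field_simp; norm_num
    rw [heq] at this
    exact this.congr fun n => (qBrace_succ q n).symm
  · have hinv : (0 : ℝ) ≤ 1 / q := by positivity
    have hinv1 : 1 / q < 1 := by rw [div_lt_one hq]; linarith
    have hpow : Filter.Tendsto (fun n : ℕ => (1 / q) ^ n) Filter.atTop (nhds 0) :=
      tendsto_pow_atTop_nhds_zero_of_lt_one hinv hinv1
    have : Filter.Tendsto (fun n : ℕ => 2 * ((1 / q) ^ n - q) / ((1 - q) * ((1 / q) ^ n + 1)))
        Filter.atTop (nhds (2 * (0 - q) / ((1 - q) * (0 + 1)))) := by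
      apply Filter.Tendsto.div
      · exact ((hpow.sub tendsto_const_nhds)).const_mul 2
      · exact ((hpow.add tendsto_const_nhds)).const_mul (1 - q)
      · have : (1 - q) * ((0:ℝ) + 1) < 0 := by nlinarith
        exact this.ne
    have heq : (2 : ℝ) * (0 - q) / ((1 - q) * (0 + 1)) = Rq q := by
      rw [Rq, if_neg (not_lt.2 h.le),
        div_eq_div_iff (by nlinarith : (1 - q) * ((0:ℝ) + 1) ≠ 0)
          (by intro hc; nlinarith : q - 1 ≠ 0)]
      ring
    rw [heq] at this
    refine this.congr fun n => ?_
    rw [qBrace_succ]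
    have hqn : (0 : ℝ) < q ^ n := pow_pos hq n
    have hqn' : (0 : ℝ) < (1/q) ^ n := pow_pos (by positivity) n
    rw [div_eq_div_iff (by nlinarith : (1 - q) * ((1/q)^n + 1) ≠ 0)
      (by nlinarith : (1 - q) * (1 + q ^ n) ≠ 0)]
    have hpow : ((1:ℝ)/q) ^ n = 1 / q ^ n := by rw [div_pow, one_pow]
    rw [hpow]
    field_simp
    ring_nf

lemma summable_impExp {q : ℝ} (hq : 0 < q) (hq1 : q ≠ 1) {z : ℂ} (hz : ‖z‖ < Rq q) :
    Summable (fun n : ℕ => z ^ n / (qBraceFact q n : ℂ)) := by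
  set L := Rq q with hL
  have hL0 : 0 < L := Rq_pos hq hq1
  set r : ℝ := (‖z‖ + L) / (2 * L) with hr
  have hr0 : 0 < r := by positivity
  have hr1 : r < 1 := by rw [div_lt_one (by positivity)]; linarith
  have hc : ‖z‖ / r < L := by
    rw [div_lt_iff₀ hr0, hr]
    rw [div_eq_iff (by positivity : (2:ℝ) * L ≠ 0)] at *
    nlinarith [norm_nonneg z]
  have hev : ∀ᶠ n in Filter.atTop, ‖z‖ / r < qBrace q (n + 1) :=
    (tendsto_qBrace hq hq1).eventually (eventually_gt_nhds hc)
  apply summable_of_ratio_norm_eventually_le hr1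
  filter_upwards [hev] with n hn
  have hb : 0 < qBrace q (n + 1) := qBrace_succ_pos hq hq1 n
  have hf : 0 < qBraceFact q n := qBraceFact_pos hq hq1 n
  have hfs : qBraceFact q (n + 1) = qBraceFact q n * qBrace q (n + 1) := by
    rw [qBraceFact, Finset.prod_range_succ]; rfl
  have h1 : ‖z ^ (n + 1) / (qBraceFact q (n + 1) : ℂ)‖
      = ‖z‖ ^ (n + 1) / qBraceFact q (n + 1) := by
    rw [norm_div, norm_pow, Complex.norm_real,
      Real.norm_of_nonneg (qBraceFact_pos hq hq1 (n + 1)).le]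
  have h2 : ‖z ^ n / (qBraceFact q n : ℂ)‖ = ‖z‖ ^ n / qBraceFact q n := by
    rw [norm_div, norm_pow, Complex.norm_real, Real.norm_of_nonneg hf.le]
  rw [h1, h2, hfs]
  have hzr : ‖z‖ ≤ r * qBrace q (n + 1) := by
    rw [div_lt_iff₀ hr0] at hn
    nlinarith
  have hzn : (0:ℝ) ≤ ‖z‖ ^ n := pow_nonneg (norm_nonneg z) n
  rw [pow_succ]
  calc ‖z‖ ^ n * ‖z‖ / (qBraceFact q n * qBrace q (n + 1))
      ≤ ‖z‖ ^ n * (r * qBrace q (n + 1)) / (qBraceFact q n * qBrace q (n + 1)) := by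
        rw [div_le_div_iff_of_pos_right (mul_pos hf hb)]
        exact mul_le_mul_of_nonneg_left hzr hzn
    _ = r * (‖z‖ ^ n / qBraceFact q n) := by
        field_simp

/-- The Jackson q-derivative of `𝓔_q` equals the average `⟨𝓔_q⟩`:
`(𝓔_q(qz) − 𝓔_q(z))/((q−1)z) = (𝓔_q(z) + 𝓔_q(qz))/2`. -/
theorem jackson_deriv_impExp (q : ℝ) (hq : 0 < q) (hq1 : q ≠ 1) (z : ℂ) (hz0 : z ≠ 0)
    (hz : ‖z‖ < Rq q) (hqz : ‖(q : ℂ) * z‖ < Rq q) :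
    (impExp q ((q : ℂ) * z) - impExp q z) / (((q : ℂ) - 1) * z) =
      (impExp q z + impExp q ((q : ℂ) * z)) / 2 := by
  set F : ℕ → ℂ := fun n => ((q : ℂ) * z) ^ n / (qBraceFact q n : ℂ) with hF
  set G : ℕ → ℂ := fun n => z ^ n / (qBraceFact q n : ℂ) with hG
  have hFs : Summable F := summable_impExp hq hq1 hqz
  have hGs : Summable G := summable_impExp hq hq1 hz
  have hq1c : ((q : ℂ) - 1) ≠ 0 := by
    intro h
    apply hq1
    have : (q : ℂ) = 1 := by linear_combination h
    exact_mod_cast this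
  have hden : ((q : ℂ) - 1) * z ≠ 0 := mul_ne_zero hq1c hz0
  rw [div_eq_div_iff hden two_ne_zero]
  have hL : impExp q ((q : ℂ) * z) - impExp q z = ∑' n, (F n - G n) :=
    (Summable.tsum_sub hFs hGs).symm
  have hR : impExp q z + impExp q ((q : ℂ) * z) = ∑' n, (G n + F n) :=
    (Summable.tsum_add hGs hFs).symm
  rw [hL, hR, ← tsum_mul_right, ← tsum_mul_right]
  have hsum2 : Summable (fun n => (F n - G n) * 2) := (hFs.sub hGs).mul_right 2
  rw [Summable.tsum_eq_zero_add hsum2]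
  have h0 : (F 0 - G 0) * 2 = 0 := by simp [hF, hG]
  rw [h0, zero_add]
  apply tsum_congr
  intro n
  have hfs : qBraceFact q (n + 1) = qBraceFact q n * qBrace q (n + 1) := by
    rw [qBraceFact, Finset.prod_range_succ]; rfl
  have hf : (qBraceFact q n : ℂ) ≠ 0 := by
    exact_mod_cast (qBraceFact_pos hq hq1 n).ne'
  have hb : (qBrace q (n + 1) : ℂ) ≠ 0 := by
    exact_mod_cast (qBrace_succ_pos hq hq1 n).ne'
  have hqn1 : (1 : ℝ) - q ^ (n + 1) ≠ 0 := by
    rcases lt_or_gt_of_ne hq1 with h | h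
    · have : q ^ (n + 1) < 1 := pow_lt_one₀ hq.le h (Nat.succ_ne_zero n)
      linarith
    · have : 1 < q ^ (n + 1) := one_lt_pow₀ h (Nat.succ_ne_zero n)
      linarith
  have hqn0 : (1 : ℝ) + q ^ n ≠ 0 := by
    have : 0 < q ^ n := pow_pos hq n
    linarith
  have hq1r : (1 : ℝ) - q ≠ 0 := fun h => hq1 (by linarith)
  have hbval : (qBrace q (n + 1) : ℂ)
      = 2 * (1 - (q:ℂ) ^ (n + 1)) / ((1 - q) * (1 + (q:ℂ) ^ n)) := by
    rw [qBrace_succ]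
    push_cast
    ring
  simp only [hF, hG, hfs]
  push_cast
  rw [hbval]
  have hqn1c : (1 : ℂ) - (q:ℂ) ^ (n + 1) ≠ 0 := by exact_mod_cast hqn1
  have hqn0c : (1 : ℂ) + (q:ℂ) ^ n ≠ 0 := by exact_mod_cast hqn0
  have hq1rc : (1 : ℂ) - (q:ℂ) ≠ 0 := by exact_mod_cast hq1r
  field_simp
  ring
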